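/- arXiv:2605.02042 — 2 statements merged into one kernel-verified Lean document; each statement's English description precedes it below -/
import Mathlib

section
/- Let H be a separable infinite-dimensional complex Hilbert space and let {f_n}_{n=0}^∞ be a sequence in H. Then {f_n} is an ICFC sequence (i.e., there exists an injective bounded linear operator B on H such that {B f_n} is a Parseval frame for H) if and only if there exist a dense linear subspace D ⊆ H and a constant A > 0 such that A‖f‖² ≤ ∑_{n=0}^∞ |⟨f, f_n⟩|² < ∞ for every f ∈ D. -/
open scoped ComplexInnerProductSpace ENNReal


private lemma orthonormal_countable {E : Type*} [NormedAddCommGroup E] [InnerProductSpace ℂ E]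
    [TopologicalSpace.SeparableSpace E] {w : Set E}
    (h : Orthonormal ℂ ((↑) : w → E)) : w.Countable := by
  have hsep : ∀ x ∈ w, ∀ y ∈ w, x ≠ y → (1:ℝ) ≤ dist x y := by
    intro x hx y hy hxy
    have hx1 : ‖x‖ = 1 := h.1 ⟨x, hx⟩
    have hy1 : ‖y‖ = 1 := h.1 ⟨y, hy⟩
    have hxy0 : ⟪x, y⟫ = 0 := h.2 (i := ⟨x, hx⟩) (j := ⟨y, hy⟩) (by simp [Subtype.ext_iff, hxy])
    have h2 : dist x y ^ 2 = 2 := by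
      rw [dist_eq_norm, @norm_sub_sq ℂ, hx1, hy1, hxy0]
      simp
      norm_num
    nlinarith [dist_nonneg (x := x) (y := y)]
  have hpd : w.PairwiseDisjoint (fun x => Metric.ball x (1/2 : ℝ)) := by
    intro x hx y hy hxy
    exact Metric.ball_disjoint_ball (by linarith [hsep x hx y hy hxy])
  exact hpd.countable_of_isOpen (fun i _ => Metric.isOpen_ball)
    (fun i _ => Metric.nonempty_ball.2 (by norm_num))

private lemma exists_hb_nat (E : Type*) [NormedAddCommGroup E] [InnerProductSpace ℂ E]
    [CompleteSpace E] [TopologicalSpace.SeparableSpace E] (hE : ¬ FiniteDimensional ℂ E) :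
    Nonempty (HilbertBasis ℕ ℂ E) := by
  obtain ⟨w, b, hb⟩ := exists_hilbertBasis ℂ E
  have hort : Orthonormal ℂ ((↑) : w → E) := by
    have := b.orthonormal
    rwa [show ⇑b = ((↑) : w → E) from hb] at this
  have hdense : (Submodule.span ℂ w).topologicalClosure = ⊤ := by
    have := b.dense_span
    rwa [hb, Subtype.range_coe] at this
  have hcw : w.Countable := orthonormal_countable hort
  have hwinf : w.Infinite := by
    by_contra hfin
    rw [Set.not_infinite] at hfin
    haveI : FiniteDimensional ℂ (Submodule.span ℂ w) := FiniteDimensional.span_of_finite ℂ hfin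
    have hcl : (Submodule.span ℂ w).topologicalClosure = Submodule.span ℂ w := by
      apply le_antisymm _ (Submodule.le_topologicalClosure _)
      intro x hx
      have : x ∈ closure (Submodule.span ℂ w : Set E) := hx
      rwa [(Submodule.closed_of_finiteDimensional _).closure_eq] at this
    have htop : Submodule.span ℂ w = ⊤ := by rw [← hcl, hdense]
    haveI : FiniteDimensional ℂ (⊤ : Submodule ℂ E) := htop ▸ ‹_›
    exact hE (Submodule.topEquiv.finiteDimensional)
  haveI : Countable ↥w := hcw.to_subtype
  haveI : Infinite ↥w := hwinf.to_subtype
  haveI : Denumerable ↥w := (nonempty_denumerable ↥w).some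
  let e : ↥w ≃ ℕ := Denumerable.eqv ↥w
  have hv : Orthonormal ℂ (((↑) : w → E) ∘ e.symm) := hort.comp _ e.symm.injective
  have hr : Set.range (((↑) : w → E) ∘ e.symm) = w := by
    rw [Set.range_comp, Equiv.range_eq_univ, Set.image_univ, Subtype.range_coe]
  refine ⟨HilbertBasis.mk hv ?_⟩
  rw [hr, hdense]


private lemma forward_dir {H : Type*} [NormedAddCommGroup H] [InnerProductSpace ℂ H]
    [CompleteSpace H] (hH : ¬ FiniteDimensional ℂ H) (fseq : ℕ → H)
    (B : H →L[ℂ] H) (hBinj : Function.Injective B)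
    (hB : ∀ f : H, HasSum (fun n => ‖⟪f, B (fseq n)⟫‖ ^ 2) (‖f‖ ^ 2)) :
    ∃ D : Submodule ℂ H, Dense (D : Set H) ∧
      ∃ A : ℝ, 0 < A ∧ ∀ f ∈ D,
        Summable (fun n => ‖⟪f, fseq n⟫‖ ^ 2) ∧
        A * ‖f‖ ^ 2 ≤ ∑' n, ‖⟪f, fseq n⟫‖ ^ 2 := by
  haveI : Nontrivial H := by
    by_contra hn
    rw [not_nontrivial_iff_subsingleton] at hn
    exact hH inferInstance
  have hBne : B ≠ 0 := by
    rintro rfl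
    obtain ⟨x, hx⟩ := exists_ne (0 : H)
    exact hx (hBinj (by simp))
  have hB0 : 0 < ‖B‖ :=
    lt_of_le_of_ne (norm_nonneg B) fun h =>
      hBne ((ContinuousLinearMap.opNorm_zero_iff B).1 h.symm)
  set Bd := ContinuousLinearMap.adjoint B with hBd
  refine ⟨LinearMap.range (Bd : H →ₗ[ℂ] H), ?_, (‖B‖ ^ 2)⁻¹, by positivity, ?_⟩
  · rw [Submodule.dense_iff_topologicalClosure_eq_top, Submodule.topologicalClosure_eq_top_iff]
    rw [Submodule.eq_bot_iff]
    intro x hx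
    have hx' : ∀ g : H, ⟪g, B x⟫ = 0 := by
      intro g
      have : ⟪Bd g, x⟫ = 0 := hx (Bd g) ⟨g, rfl⟩
      rwa [hBd, ContinuousLinearMap.adjoint_inner_left] at this
    have : B x = 0 := by
      have := hx' (B x)
      rwa [inner_self_eq_zero] at this
    exact hBinj (by simpa using this)
  · rintro f ⟨g, rfl⟩; simp only [ContinuousLinearMap.coe_coe]
    have hkey : (fun n => ‖⟪Bd g, fseq n⟫‖ ^ 2) = fun n => ‖⟪g, B (fseq n)⟫‖ ^ 2 := by
      funext n
      rw [hBd, ContinuousLinearMap.adjoint_inner_left]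
    constructor
    · rw [hkey]; exact (hB g).summable
    · rw [hkey, (hB g).tsum_eq]
      have h1 : ‖Bd g‖ ≤ ‖B‖ * ‖g‖ := by
        calc ‖Bd g‖ ≤ ‖Bd‖ * ‖g‖ := Bd.le_opNorm g
        _ = ‖B‖ * ‖g‖ := by rw [hBd, LinearIsometryEquiv.norm_map ContinuousLinearMap.adjoint B]
      rw [inv_mul_le_iff₀ (by positivity)]
      nlinarith [norm_nonneg (Bd g), norm_nonneg g, norm_nonneg B]



set_option maxHeartbeats 1000000 in
set_option synthInstance.maxHeartbeats 200000 in
private lemma reverse_dir {H : Type*} [NormedAddCommGroup H] [InnerProductSpace ℂ H]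
    [CompleteSpace H] [TopologicalSpace.SeparableSpace H]
    (hH : ¬ FiniteDimensional ℂ H) (fseq : ℕ → H)
    (D : Submodule ℂ H) (hD : Dense (D : Set H)) (A : ℝ) (hA : 0 < A)
    (h : ∀ f ∈ D, Summable (fun n => ‖⟪f, fseq n⟫‖ ^ 2) ∧
          A * ‖f‖ ^ 2 ≤ ∑' n, ‖⟪f, fseq n⟫‖ ^ 2) :
    ∃ B : H →L[ℂ] H, Function.Injective B ∧
        ∀ f : H, HasSum (fun n => ‖⟪f, B (fseq n)⟫‖ ^ 2) (‖f‖ ^ 2) := by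
  classical
  -- conversion of rpow exponent
  have hpow : ∀ x : ℝ, 0 ≤ x → x ^ ((2:ℝ≥0∞)).toReal = x ^ (2:ℕ) := by
    intro x hx
    rw [ENNReal.toReal_ofNat]
    rw [show ((2:ℝ)) = ((2:ℕ):ℝ) by norm_num, Real.rpow_natCast]
  -- membership of the analysis sequence in ℓ²
  have hmem : ∀ f : D, Memℓp (fun n => ⟪fseq n, (f:H)⟫) 2 := by
    intro f
    apply memℓp_gen
    have hs := (h f f.2).1
    have he : (fun n => ‖⟪fseq n, (f:H)⟫‖ ^ ((2:ℝ≥0∞)).toReal)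
        = fun n => ‖⟪(f:H), fseq n⟫‖ ^ (2:ℕ) := by
      funext n
      rw [norm_inner_symm, hpow _ (norm_nonneg _)]
    rw [he]
    exact hs
  let Θ : D →ₗ[ℂ] ↥(lp (fun _ : ℕ => ℂ) 2) :=
    { toFun := fun f => ⟨fun n => ⟪fseq n, (f:H)⟫, hmem f⟩
      map_add' := by
        intro f g
        apply Subtype.ext
        funext n
        simp only [lp.coeFn_add, Pi.add_apply]
        rw [Submodule.coe_add, inner_add_right]
      map_smul' := by
        intro c f
        apply Subtype.ext
        funext n
        simp only [lp.coeFn_smul, Pi.smul_apply, RingHom.id_apply]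
        rw [Submodule.coe_smul, inner_smul_right, smul_eq_mul] }
  have hΘnorm : ∀ f : D, ‖Θ f‖ ^ (2:ℕ) = ∑' n, ‖⟪(f:H), fseq n⟫‖ ^ (2:ℕ) := by
    intro f
    have h1 := lp.norm_rpow_eq_tsum (p := 2) (by norm_num) (Θ f)
    rw [hpow _ (norm_nonneg _)] at h1
    rw [h1]
    congr 1
    funext n
    rw [hpow _ (norm_nonneg _), norm_inner_symm]
    rfl
  have hlow : ∀ f : D, Real.sqrt A * ‖(f:H)‖ ≤ ‖Θ f‖ := by
    intro f
    have h1 : A * ‖(f:H)‖ ^ 2 ≤ ∑' n, ‖⟪(f:H), fseq n⟫‖ ^ 2 := (h f f.2).2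
    have h2 := hΘnorm f
    nlinarith [Real.sq_sqrt hA.le, Real.sqrt_nonneg A, norm_nonneg (Θ f),
      norm_nonneg ((f:H)), sq_nonneg (‖Θ f‖ + Real.sqrt A * ‖(f:H)‖)]
  have hΘinj : Function.Injective Θ := by
    intro f g hfg
    have h1 := hlow (f - g)
    rw [map_sub, hfg, sub_self, norm_zero] at h1
    have h2 : ‖((f - g : D):H)‖ = 0 := by
      nlinarith [Real.sqrt_pos.2 hA, norm_nonneg ((f - g : D):H)]
    have : ((f - g : D):H) = 0 := norm_eq_zero.1 h2
    have : (f - g : D) = 0 := by exact_mod_cast this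
    rwa [sub_eq_zero] at this
  set M : Submodule ℂ ↥(lp (fun _ : ℕ => ℂ) 2) := (LinearMap.range Θ).topologicalClosure with hM
  haveI : CompleteSpace ↥M := (Submodule.isClosed_topologicalClosure _).completeSpace_coe
  let ΘM : D →ₗ[ℂ] ↥M := Θ.codRestrict M (fun f => (LinearMap.range Θ).le_topologicalClosure ⟨f, rfl⟩)
  have hΘMinj : Function.Injective ΘM := by
    intro f g hfg
    apply hΘinj
    have := congrArg (Subtype.val) hfg
    exact this
  set K' : Submodule ℂ ↥M := LinearMap.range ΘM with hK'
  have himg : (Subtype.val '' (K' : Set ↥M)) = ((LinearMap.range Θ : Submodule ℂ _) : Set _) := by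
    ext y
    constructor
    · rintro ⟨v, ⟨f, rfl⟩, rfl⟩
      exact ⟨f, rfl⟩
    · rintro ⟨f, rfl⟩
      exact ⟨ΘM f, ⟨f, rfl⟩, rfl⟩
  have hK'dense : Dense (K' : Set ↥M) := by
    intro x
    rw [closure_subtype, himg]
    exact x.2
  -- the inverse operator on K'
  let eqv : D ≃ₗ[ℂ] ↥K' := LinearEquiv.ofInjective ΘM hΘMinj
  let T₀ : ↥K' →ₗ[ℂ] H := D.subtype ∘ₗ (eqv.symm : ↥K' →ₗ[ℂ] D)
  have hT₀eq : ∀ f : D, T₀ (eqv f) = f := by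
    intro f
    simp only [T₀, LinearMap.coe_comp, Function.comp_apply, LinearEquiv.coe_coe,
      LinearEquiv.symm_apply_apply, Submodule.coe_subtype]
  have hT₀bound : ∀ x : ↥K', ‖T₀ x‖ ≤ (Real.sqrt A)⁻¹ * ‖x‖ := by
    intro x
    set g : D := eqv.symm x with hg
    have hxg : (↑(↑x : ↥M) : ↥(lp (fun _ : ℕ => ℂ) 2)) = Θ g := by
      have : eqv g = x := by rw [hg, LinearEquiv.apply_symm_apply]
      rw [← this]
      rfl
    have hnx : ‖x‖ = ‖Θ g‖ := by
      rw [show ‖x‖ = ‖(↑(↑x : ↥M) : ↥(lp (fun _ : ℕ => ℂ) 2))‖ from rfl, hxg]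
    have hTx : T₀ x = (g : H) := rfl
    rw [hTx, hnx]
    have hls := hlow g
    have hsA : 0 < Real.sqrt A := Real.sqrt_pos.2 hA
    rw [inv_mul_eq_div, le_div_iff₀ hsA]
    nlinarith [hls]
  let T₀c : ↥K' →L[ℂ] H := T₀.mkContinuous ((Real.sqrt A)⁻¹) hT₀bound
  have hdr : DenseRange ⇑(K'.subtypeL) := hK'dense.denseRange_val
  have hui : IsUniformInducing ⇑(K'.subtypeL) := isometry_subtype_coe.isUniformInducing
  let T : ↥M →L[ℂ] H := T₀c.extend K'.subtypeL
  have hTval : ∀ f : D, T (ΘM f) = f := by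
    intro f
    have h1 : ΘM f = K'.subtypeL (eqv f) := rfl
    rw [h1, ContinuousLinearMap.extend_eq _ hdr hui]
    exact hT₀eq f
  have hTdense : DenseRange ⇑T := by
    apply Dense.mono _ hD
    intro x hx
    exact ⟨ΘM ⟨x, hx⟩, hTval ⟨x, hx⟩⟩
  set T' : H →L[ℂ] ↥M := ContinuousLinearMap.adjoint T with hT'
  have hT'inj : Function.Injective T' := by
    intro a b hab
    have hd : Dense ((LinearMap.range (T : ↥M →ₗ[ℂ] H) : Submodule ℂ H) : Set H) := by
      have : ((LinearMap.range (T : ↥M →ₗ[ℂ] H) : Submodule ℂ H) : Set H) = Set.range ⇑T := by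
        ext y; simp [LinearMap.mem_range]
      rw [this]; exact hTdense
    have hz : a - b = 0 := by
      apply hd.eq_zero_of_inner_right ℂ
      rintro _ ⟨x, rfl⟩
      show ⟪T x, a - b⟫ = 0
      rw [← ContinuousLinearMap.adjoint_inner_right, ← hT', map_sub, hab, sub_self,
        inner_zero_right]
    rwa [sub_eq_zero] at hz
  -- inner with projection of single
  have hproj : ∀ (x : ↥M) (n : ℕ),
      ⟪x, M.orthogonalProjectionOnto (lp.single 2 n 1)⟫
        = ⟪(↑x : ↥(lp (fun _ : ℕ => ℂ) 2)), lp.single 2 n 1⟫ := by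
    intro x n
    rw [Submodule.coe_inner]
    rw [← Submodule.coe_inner, Submodule.inner_orthogonalProjectionOnto_eq_of_mem_left]
  have hkeyA : ∀ n, T' (fseq n) = M.orthogonalProjectionOnto (lp.single 2 n 1) := by
    intro n
    apply hK'dense.eq_of_inner_right ℂ
    rintro _ ⟨f, rfl⟩
    show ⟪(ΘM f : ↥M), T' (fseq n)⟫ = ⟪(ΘM f : ↥M), M.orthogonalProjectionOnto (lp.single 2 n 1)⟫
    rw [hT', ContinuousLinearMap.adjoint_inner_right, hTval f, hproj]
    rw [lp.inner_single_right]
    show ⟪(f:H), fseq n⟫ = ⟪⟪fseq n, (f:H)⟫, (1:ℂ)⟫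
    rw [RCLike.inner_apply', mul_one, inner_conj_symm]
  -- separability and infinite dimensionality
  obtain ⟨bH⟩ := exists_hb_nat H hH
  haveI : TopologicalSpace.SeparableSpace ↥(lp (fun _ : ℕ => ℂ) 2) :=
    bH.repr.surjective.denseRange.separableSpace bH.repr.continuous
  haveI : SecondCountableTopology ↥(lp (fun _ : ℕ => ℂ) 2) :=
    UniformSpace.secondCountable_of_separable _
  haveI : TopologicalSpace.SeparableSpace ↥M :=
    TopologicalSpace.SecondCountableTopology.to_separableSpace
  have hMinf : ¬ FiniteDimensional ℂ ↥M := by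
    intro hfin
    haveI := hfin
    haveI : FiniteDimensional ℂ ↥K' := inferInstance
    haveI : FiniteDimensional ℂ ↥D := eqv.symm.finiteDimensional
    have hDtop : (D : Set H) = Set.univ := by
      rw [← (Submodule.closed_of_finiteDimensional D).closure_eq]
      exact hD.closure_eq
    have hD' : D = ⊤ := by
      rw [Submodule.eq_top_iff']
      intro x
      show x ∈ (D : Set H)
      rw [hDtop]; trivial
    haveI : FiniteDimensional ℂ ↥(⊤ : Submodule ℂ H) := hD' ▸ ‹FiniteDimensional ℂ ↥D›
    exact hH (Submodule.topEquiv.finiteDimensional)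
  obtain ⟨bM⟩ := exists_hb_nat ↥M hMinf
  let U : ↥M ≃ₗᵢ[ℂ] H := bM.repr.trans bH.repr.symm
  refine ⟨U.toLinearIsometry.toContinuousLinearMap.comp T', ?_, ?_⟩
  · intro a b hab
    apply hT'inj
    apply U.injective
    exact hab
  · intro f
    set y : ↥M := U.symm f with hy
    have hfn : ∀ n, ‖⟪f, (U.toLinearIsometry.toContinuousLinearMap.comp T') (fseq n)⟫‖ ^ (2:ℕ)
        = ‖(((↑y : ↥(lp (fun _ : ℕ => ℂ) 2)) : ℕ → ℂ) n)‖ ^ (2:ℕ) := by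
      intro n
      have h1 : (U.toLinearIsometry.toContinuousLinearMap.comp T') (fseq n)
          = U (T' (fseq n)) := rfl
      rw [h1, hkeyA n]
      have h2 : ⟪f, U (M.orthogonalProjectionOnto (lp.single 2 n 1))⟫
          = ⟪y, M.orthogonalProjectionOnto (lp.single 2 n 1)⟫ := by
        conv_lhs => rw [show f = U y from (U.apply_symm_apply f).symm]
        rw [LinearIsometryEquiv.inner_map_map]
      rw [h2, hproj, lp.inner_single_right, RCLike.inner_apply', mul_one, RCLike.norm_conj]
    have hsum := lp.hasSum_norm (p := 2) (by norm_num) (↑y : ↥(lp (fun _ : ℕ => ℂ) 2))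
    have hnf : ‖(↑y : ↥(lp (fun _ : ℕ => ℂ) 2))‖ = ‖f‖ := by
      rw [show ‖(↑y : ↥(lp (fun _ : ℕ => ℂ) 2))‖ = ‖y‖ from rfl, hy,
        LinearIsometryEquiv.norm_map]
    have hgoal : HasSum (fun n => ‖(((↑y : ↥(lp (fun _ : ℕ => ℂ) 2)) : ℕ → ℂ) n)‖ ^ (2:ℕ)) (‖f‖ ^ (2:ℕ)) := by
      have he1 : (fun n => ‖(((↑y : ↥(lp (fun _ : ℕ => ℂ) 2)) : ℕ → ℂ) n)‖ ^ ((2:ℝ≥0∞)).toReal)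
          = fun n => ‖(((↑y : ↥(lp (fun _ : ℕ => ℂ) 2)) : ℕ → ℂ) n)‖ ^ (2:ℕ) := by
        funext n; rw [hpow _ (norm_nonneg _)]
      rw [← he1, ← hnf, ← hpow _ (norm_nonneg _)]
      exact hsum
    have hEq : (fun n => ‖⟪f, (U.toLinearIsometry.toContinuousLinearMap.comp T') (fseq n)⟫‖ ^ (2:ℕ))
        = fun n => ‖(((↑y : ↥(lp (fun _ : ℕ => ℂ) 2)) : ℕ → ℂ) n)‖ ^ (2:ℕ) := funext hfn
    rw [hEq]
    exact hgoal


/-- `{f_n}` is an ICFC sequence (some injective bounded operator `B` maps it to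
a Parseval frame of `H`) iff there exist a dense subspace `D ⊆ H` and `A > 0` with
`A‖f‖² ≤ ∑ |⟨f, f_n⟩|² < ∞` for all `f ∈ D`. -/
theorem stmt4 {H : Type*} [NormedAddCommGroup H] [InnerProductSpace ℂ H]
    [CompleteSpace H] [TopologicalSpace.SeparableSpace H]
    (hH : ¬ FiniteDimensional ℂ H) (fseq : ℕ → H) :
    (∃ B : H →L[ℂ] H, Function.Injective B ∧
        ∀ f : H, HasSum (fun n => ‖⟪f, B (fseq n)⟫‖ ^ 2) (‖f‖ ^ 2)) ↔
      ∃ D : Submodule ℂ H, Dense (D : Set H) ∧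
        ∃ A : ℝ, 0 < A ∧ ∀ f ∈ D,
          Summable (fun n => ‖⟪f, fseq n⟫‖ ^ 2) ∧
          A * ‖f‖ ^ 2 ≤ ∑' n, ‖⟪f, fseq n⟫‖ ^ 2 := by
  constructor
  · rintro ⟨B, hBinj, hB⟩
    exact forward_dir hH fseq B hBinj hB
  · rintro ⟨D, hD, A, hA, h⟩
    exact reverse_dir hH fseq D hD A hA h
end

section
/- Let H be a separable infinite-dimensional complex Hilbert space and let {f_n}_{n=0}^∞ be a sequence in H. The following are equivalent: (1) {f_n} is a CO sequence, i.e., there exists a bounded linear operator B on H such that {B f_n} is an orthonormal basis of H; (2) the analysis operator of {f_n} is surjective onto ℓ²(ℕ), i.e., for every c ∈ ℓ²(ℕ) there exists f ∈ H with ⟨f, f_n⟩ = c_n for all n; (3) {f_n} is a Riesz–Fischer sequence, i.e., there exists A > 0 such that A ∑_{n=0}^k |a_n|² ≤ ‖∑_{n=0}^k a_n f_n‖² for every k and all scalars a_0, …, a_k. -/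
open scoped ComplexInnerProductSpace


lemma aux_exists_hb {H : Type*} [NormedAddCommGroup H] [InnerProductSpace ℂ H]
    [CompleteSpace H] [TopologicalSpace.SeparableSpace H]
    (hH : ¬ FiniteDimensional ℂ H) : Nonempty (HilbertBasis ℕ ℂ H) := by
  obtain ⟨w, b, hb⟩ := exists_hilbertBasis ℂ H
  have honw : Orthonormal ℂ ((↑) : w → H) := hb ▸ b.orthonormal
  -- w vectors are 1-separated
  have hsep : ∀ i j : w, i ≠ j → (1 : ℝ) ≤ dist (i : H) (j : H) := by
    intro i j hij
    have h2 : ‖(i : H) - (j : H)‖ ^ 2 = 2 := by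
      rw [@norm_sub_sq ℂ, honw.1 i, honw.1 j]
      have : ⟪(i : H), (j : H)⟫ = 0 := honw.2 hij
      simp [this]
      ring
    rw [dist_eq_norm]
    nlinarith [norm_nonneg ((i : H) - (j : H))]
  have hcount : Countable w := by
    refine Pairwise.countable_of_isOpen_disjoint
      (s := fun i : w => Metric.ball (i : H) (1/2)) ?_ (fun i => Metric.isOpen_ball)
      (fun i => Metric.nonempty_ball.2 (by norm_num))
    intro i j hij
    apply Metric.ball_disjoint_ball
    calc (1/2 : ℝ) + 1/2 = 1 := by norm_num
    _ ≤ dist (i : H) (j : H) := hsep i j hij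
  have hinf : Infinite w := by
    by_contra hfin
    rw [not_infinite_iff_finite] at hfin
    have hwfin : w.Finite := Set.toFinite w
    have : FiniteDimensional ℂ (Submodule.span ℂ w) := FiniteDimensional.span_of_finite ℂ hwfin
    have hclosed : IsClosed ((Submodule.span ℂ w : Submodule ℂ H) : Set H) :=
      Submodule.closed_of_finiteDimensional _
    have hrange : Set.range ⇑b = w := by rw [hb]; exact Subtype.range_coe
    have hdense := b.dense_span
    rw [hrange] at hdense
    rw [hclosed.submodule_topologicalClosure_eq] at hdense
    rw [hdense] at this
    exact hH (Module.finite_def.mpr (by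
      have := Module.Finite.equiv (LinearEquiv.ofTop _ rfl : (⊤ : Submodule ℂ H) ≃ₗ[ℂ] H)
      exact Module.finite_def.mp this))
  obtain ⟨den⟩ := nonempty_denumerable w
  let g : ℕ ≃ w := (Denumerable.eqv w).symm
  have hv : Orthonormal ℂ (fun n : ℕ => ((g n : w) : H)) :=
    honw.comp g g.injective
  have hrange : Set.range (fun n : ℕ => ((g n : w) : H)) = w := by
    rw [show (fun n : ℕ => ((g n : w) : H)) = Subtype.val ∘ g from rfl, Set.range_comp, Equiv.range_eq_univ, Set.image_univ, Subtype.range_coe]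
  have hsp : ⊤ ≤ (Submodule.span ℂ (Set.range (fun n : ℕ => ((g n : w) : H)))).topologicalClosure := by
    rw [hrange]
    have hrange' : Set.range ⇑b = w := by rw [hb]; exact Subtype.range_coe
    rw [← hrange', b.dense_span]
  exact ⟨HilbertBasis.mk hv hsp⟩


lemma aux_memlp_conj (c : lp (fun _ : ℕ => ℂ) 2) :
    Memℓp (fun n => (starRingEnd ℂ) (c n)) 2 := by
  have hc := lp.memℓp c
  rw [memℓp_gen_iff (by norm_num : 0 < (2:ENNReal).toReal)] at hc ⊢
  simpa using hc

lemma aux_12 {H : Type*} [NormedAddCommGroup H] [InnerProductSpace ℂ H] [CompleteSpace H]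
    (fseq : ℕ → H)
    (h1 : ∃ B : H →L[ℂ] H, Orthonormal ℂ (fun n => B (fseq n)) ∧
        (Submodule.span ℂ (Set.range fun n => B (fseq n))).topologicalClosure = ⊤) :
    ∀ c : lp (fun _ : ℕ => ℂ) 2, ∃ f : H, ∀ n : ℕ, ⟪f, fseq n⟫ = c n := by
  obtain ⟨B, hB, hsp⟩ := h1
  let b : HilbertBasis ℕ ℂ H := HilbertBasis.mk hB hsp.ge
  have hb : ∀ n, b n = B (fseq n) := by
    intro n
    rw [show (b : ℕ → H) = fun n => B (fseq n) from HilbertBasis.coe_mk _ _]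
  intro c
  let cc : lp (fun _ : ℕ => ℂ) 2 := ⟨fun n => (starRingEnd ℂ) (c n), aux_memlp_conj c⟩
  let g : H := b.repr.symm cc
  refine ⟨ContinuousLinearMap.adjoint B g, fun n => ?_⟩
  rw [ContinuousLinearMap.adjoint_inner_left, ← hb n, ← inner_conj_symm,
    ← b.repr_apply_apply]
  have : b.repr g = cc := b.repr.apply_symm_apply cc
  rw [this]
  simp [cc]


private lemma rpow_toReal_two (x : ℝ) : x ^ (2:ENNReal).toReal = x ^ 2 := by
  rw [show ((2:ENNReal).toReal) = (2:ℝ) by norm_num, Real.rpow_two]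

lemma aux_eval_cont (n : ℕ) : Continuous fun c : lp (fun _ : ℕ => ℂ) 2 => c n := by
  refine LipschitzWith.continuous (K := 1) (LipschitzWith.of_dist_le_mul fun c d => ?_)
  simp only [NNReal.coe_one, one_mul, dist_eq_norm]
  have : (c : ℕ → ℂ) n - d n = (c - d) n := rfl
  rw [this]
  exact lp.norm_apply_le_norm two_ne_zero (c - d) n

lemma aux_23 {H : Type*} [NormedAddCommGroup H] [InnerProductSpace ℂ H] [CompleteSpace H]
    (fseq : ℕ → H)
    (h2 : ∀ c : lp (fun _ : ℕ => ℂ) 2, ∃ f : H, ∀ n : ℕ, ⟪f, fseq n⟫ = c n) :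
    ∃ A : ℝ, 0 < A ∧ ∀ (k : ℕ) (a : ℕ → ℂ),
        A * ∑ n ∈ Finset.range (k + 1), ‖a n‖ ^ 2 ≤
          ‖∑ n ∈ Finset.range (k + 1), a n • fseq n‖ ^ 2 := by
  classical
  set L2 := lp (fun _ : ℕ => ℂ) 2 with hL2
  let X : Submodule ℂ (H × L2) :=
    { carrier := {p | ∀ n, ⟪p.1, fseq n⟫ = (starRingEnd ℂ) (p.2 n)}
      add_mem' := by
        intro p q hp hq n
        have : ((p + q).2 : ℕ → ℂ) n = p.2 n + q.2 n := rfl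
        simp [inner_add_left, hp n, hq n, this]
      zero_mem' := by
        intro n
        have : ((0 : H × L2).2 : ℕ → ℂ) n = 0 := rfl
        simp [this]
      smul_mem' := by
        intro c p hp n
        show ⟪(c • p).1, fseq n⟫ = (starRingEnd ℂ) (((c • p).2 : ℕ → ℂ) n)
        have h1 : ((c • p).2 : ℕ → ℂ) n = c * p.2 n := rfl
        rw [h1, map_mul, show (c • p).1 = c • p.1 from rfl, inner_smul_left, hp n] }
  have hXc : IsClosed (X : Set (H × L2)) := by
    have : (X : Set (H × L2)) = ⋂ n, {p : H × L2 | ⟪p.1, fseq n⟫ = (starRingEnd ℂ) (p.2 n)} := by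
      ext p; simp [X, Set.mem_iInter]
    rw [this]
    refine isClosed_iInter fun n => isClosed_eq ?_ ?_
    · exact Continuous.inner continuous_fst continuous_const
    · exact Complex.continuous_conj.comp ((aux_eval_cont n).comp continuous_snd)
  haveI : CompleteSpace X := IsClosed.completeSpace_coe (hs := hXc)
  let T : X →L[ℂ] L2 := (ContinuousLinearMap.snd ℂ H L2).comp X.subtypeL
  have hsurj : Function.Surjective T := by
    intro c
    have hmem : Memℓp (fun n => (starRingEnd ℂ) (c n)) 2 := by
      have hc := lp.memℓp c
      rw [memℓp_gen_iff (by norm_num : 0 < (2:ENNReal).toReal)] at hc ⊢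
      simpa using hc
    obtain ⟨f, hf⟩ := h2 (⟨fun n => (starRingEnd ℂ) (c n), hmem⟩ : L2)
    refine ⟨⟨(f, c), fun n => ?_⟩, rfl⟩
    rw [hf n]
  obtain ⟨C, hC, hCb⟩ := T.exists_preimage_norm_le hsurj
  refine ⟨(C ^ 2)⁻¹, by positivity, fun k a => ?_⟩
  set s : ℝ := ∑ n ∈ Finset.range (k + 1), ‖a n‖ ^ 2 with hs
  have hs0 : 0 ≤ s := Finset.sum_nonneg fun n _ => by positivity
  rcases eq_or_lt_of_le hs0 with hz | hpos
  · rw [← hz, mul_zero]; positivity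
  let cf : ℕ → ℂ := fun n => if n ∈ Finset.range (k + 1) then a n else 0
  have hcfmem : Memℓp cf 2 := by
    apply memℓp_gen
    apply summable_of_ne_finset_zero (s := Finset.range (k + 1))
    intro n hn
    simp only [cf, if_neg hn, norm_zero]
    rw [Real.zero_rpow (by norm_num)]
  let c : L2 := ⟨cf, hcfmem⟩
  obtain ⟨x, hx, hxn⟩ := hCb c
  have hx2 : (x : H × L2).2 = c := hx
  have hsol : ∀ n, ⟪(x : H × L2).1, fseq n⟫ = (starRingEnd ℂ) (cf n) := by
    intro n
    have := x.2 n
    rw [hx2] at this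
    exact this
  set f : H := (x : H × L2).1 with hfdef
  set S : H := ∑ n ∈ Finset.range (k + 1), a n • fseq n with hS
  have hkey : ⟪f, S⟫ = (s : ℂ) := by
    rw [hS, inner_sum]
    have : ∀ n ∈ Finset.range (k + 1),
        ⟪f, a n • fseq n⟫ = ((‖a n‖ ^ 2 : ℝ) : ℂ) := by
      intro n hn
      rw [inner_smul_right, hsol n]
      simp only [cf, if_pos hn]
      rw [RCLike.mul_conj]
      norm_cast
    rw [Finset.sum_congr rfl this, hs]
    push_cast
    ring
  have hcnorm : ‖c‖ = Real.sqrt s := by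
    have h2' : (0:ℝ) < (2:ENNReal).toReal := by norm_num
    rw [lp.norm_eq_tsum_rpow h2' c]
    have htsum : (∑' n, ‖(c : ℕ → ℂ) n‖ ^ (2:ENNReal).toReal) = s := by
      rw [tsum_eq_sum (s := Finset.range (k + 1)) (fun n hn => by
        show ‖cf n‖ ^ (2:ENNReal).toReal = 0
        simp only [cf, if_neg hn, norm_zero]
        rw [Real.zero_rpow (by norm_num)])]
      refine Finset.sum_congr rfl fun n hn => ?_
      show ‖cf n‖ ^ (2:ENNReal).toReal = ‖a n‖ ^ 2
      rw [rpow_toReal_two]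
      simp only [cf, if_pos hn]
    rw [htsum, show ((2:ENNReal).toReal) = (2:ℝ) by norm_num, Real.sqrt_eq_rpow]
  have hfb : ‖f‖ ≤ C * Real.sqrt s := by
    calc ‖f‖ ≤ ‖(x : H × L2)‖ := norm_fst_le _
    _ = ‖x‖ := rfl
    _ ≤ C * ‖c‖ := hxn
    _ = C * Real.sqrt s := by rw [hcnorm]
  have hinneq : ‖⟪f, S⟫‖ = s := by
    rw [hkey, Complex.norm_real, Real.norm_of_nonneg hs0]
  have hbound : s ≤ C * Real.sqrt s * ‖S‖ := by
    calc s = ‖⟪f, S⟫‖ := hinneq.symm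
    _ ≤ ‖f‖ * ‖S‖ := norm_inner_le_norm f S
    _ ≤ C * Real.sqrt s * ‖S‖ := mul_le_mul_of_nonneg_right hfb (norm_nonneg S)
  have hsqrt : Real.sqrt s ≤ C * ‖S‖ := by
    have hss : Real.sqrt s * Real.sqrt s = s := Real.mul_self_sqrt hs0
    have hsp : 0 < Real.sqrt s := Real.sqrt_pos.mpr hpos
    nlinarith [hbound]
  calc (C ^ 2)⁻¹ * s = (C ^ 2)⁻¹ * (Real.sqrt s * Real.sqrt s) := by
        rw [Real.mul_self_sqrt hs0]
    _ ≤ (C ^ 2)⁻¹ * ((C * ‖S‖) * (C * ‖S‖)) := by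
        apply mul_le_mul_of_nonneg_left _ (by positivity)
        apply mul_le_mul hsqrt hsqrt (Real.sqrt_nonneg s) (by positivity)
    _ = ‖S‖ ^ 2 * ((C ^ 2)⁻¹ * C ^ 2) := by ring
    _ = ‖S‖ ^ 2 := by rw [inv_mul_cancel₀ (by positivity), mul_one]



lemma aux_31 {H : Type*} [NormedAddCommGroup H] [InnerProductSpace ℂ H]
    [CompleteSpace H] [TopologicalSpace.SeparableSpace H]
    (hH : ¬ FiniteDimensional ℂ H) (fseq : ℕ → H)
    (h3 : ∃ A : ℝ, 0 < A ∧ ∀ (k : ℕ) (a : ℕ → ℂ),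
        A * ∑ n ∈ Finset.range (k + 1), ‖a n‖ ^ 2 ≤
          ‖∑ n ∈ Finset.range (k + 1), a n • fseq n‖ ^ 2) :
    ∃ B : H →L[ℂ] H, Orthonormal ℂ (fun n => B (fseq n)) ∧
        (Submodule.span ℂ (Set.range fun n => B (fseq n))).topologicalClosure = ⊤ := by
  classical
  obtain ⟨A, hA, hRF⟩ := h3
  -- Riesz–Fischer over arbitrary finsets
  have hRF' : ∀ (t : Finset ℕ) (a : ℕ → ℂ),
      A * ∑ n ∈ t, ‖a n‖ ^ 2 ≤ ‖∑ n ∈ t, a n • fseq n‖ ^ 2 := by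
    intro t a
    set k := t.sup id with hk
    have hsub : t ⊆ Finset.range (k + 1) := fun n hn =>
      Finset.mem_range.mpr (Nat.lt_succ_of_le (Finset.le_sup (f := id) hn))
    set a' : ℕ → ℂ := fun n => if n ∈ t then a n else 0 with ha'
    have h1 : ∑ n ∈ Finset.range (k + 1), ‖a' n‖ ^ 2 = ∑ n ∈ t, ‖a n‖ ^ 2 := by
      rw [← Finset.sum_subset hsub (fun n _ hn => by simp [a', if_neg hn])]
      exact Finset.sum_congr rfl fun n hn => by simp [a', if_pos hn]
    have h2 : ∑ n ∈ Finset.range (k + 1), a' n • fseq n = ∑ n ∈ t, a n • fseq n := by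
      rw [← Finset.sum_subset hsub (fun n _ hn => by simp [a', if_neg hn])]
      exact Finset.sum_congr rfl fun n hn => by simp [a', if_pos hn]
    have := hRF k a'
    rw [h1, h2] at this
    exact this
  -- linear independence
  have hli : LinearIndependent ℂ fseq := by
    rw [linearIndependent_iff']
    intro t g hsum i hit
    have h := hRF' t g
    rw [hsum] at h
    simp only [norm_zero] at h
    have h0 : ∑ n ∈ t, ‖g n‖ ^ 2 ≤ 0 := by nlinarith
    have hall : ∀ n ∈ t, ‖g n‖ ^ 2 = 0 := by
      intro n hn
      have := Finset.sum_nonneg (fun m (_ : m ∈ t) => (by positivity : (0:ℝ) ≤ ‖g m‖ ^ 2))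
      have hle : ‖g n‖ ^ 2 ≤ ∑ m ∈ t, ‖g m‖ ^ 2 :=
        Finset.single_le_sum (f := fun m => ‖g m‖ ^ 2) (fun m _ => by positivity) hn
      nlinarith [sq_nonneg ‖g n‖]
    have := hall i hit
    have : ‖g i‖ = 0 := by nlinarith [norm_nonneg (g i)]
    simpa using this
  set V : Submodule ℂ H := Submodule.span ℂ (Set.range fseq) with hV
  let bV : Module.Basis ℕ ℂ V := Module.Basis.span hli
  obtain ⟨e⟩ := aux_exists_hb hH
  let B₀ : V →ₗ[ℂ] H := bV.constr ℂ (fun n => e n)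
  -- the coercion of an element of V as a combination of fseq
  have hxrepr : ∀ x : V, x = ∑ n ∈ (bV.repr x).support, bV.repr x n • bV n := by
    intro x
    have h := bV.linearCombination_repr x
    rw [Finsupp.linearCombination_apply, Finsupp.sum] at h
    exact h.symm
  have hcoe : ∀ x : V, ((x : H)) = ∑ n ∈ (bV.repr x).support, bV.repr x n • fseq n := by
    intro x
    conv_lhs => rw [hxrepr x]
    push_cast
    exact Finset.sum_congr rfl fun n _ => by rw [show ((bV n : H)) = fseq n from congrArg Subtype.val (Module.Basis.span_apply hli n)]
  have hB₀ : ∀ x : V, B₀ x = ∑ n ∈ (bV.repr x).support, bV.repr x n • (e n : H) := by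
    intro x
    conv_lhs => rw [hxrepr x]
    rw [map_sum]
    exact Finset.sum_congr rfl fun n _ => by rw [map_smul, Module.Basis.constr_basis]
  -- the bound
  have hbound : ∀ x : V, ‖B₀ x‖ ≤ Real.sqrt A⁻¹ * ‖x‖ := by
    intro x
    set r := bV.repr x with hr
    have hnorm1 : ‖B₀ x‖ ^ 2 = ∑ n ∈ r.support, ‖r n‖ ^ 2 := by
      have h1 : ⟪B₀ x, B₀ x⟫ = ∑ n ∈ r.support, (starRingEnd ℂ) (r n) * r n := by
        rw [hB₀ x]
        exact e.orthonormal.inner_sum r r r.support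
      have h2 : (∑ n ∈ r.support, (starRingEnd ℂ) (r n) * r n)
          = ((∑ n ∈ r.support, ‖r n‖ ^ 2 : ℝ) : ℂ) := by
        push_cast
        refine Finset.sum_congr rfl fun n _ => ?_
        rw [RCLike.conj_mul]
        norm_cast
      have h3 : ⟪B₀ x, B₀ x⟫ = ((‖B₀ x‖ ^ 2 : ℝ) : ℂ) := by
        rw [inner_self_eq_norm_sq_to_K]
        push_cast
        rfl
      have h4 := h3.symm.trans (h1.trans h2)
      exact_mod_cast h4
    have hnorm2 : A * ∑ n ∈ r.support, ‖r n‖ ^ 2 ≤ ‖x‖ ^ 2 := by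
      have := hRF' r.support r
      rw [← hcoe x] at this
      simpa using this
    have hsq : ‖B₀ x‖ ^ 2 ≤ A⁻¹ * ‖x‖ ^ 2 := by
      rw [hnorm1]
      calc ∑ n ∈ r.support, ‖r n‖ ^ 2
          = A⁻¹ * (A * ∑ n ∈ r.support, ‖r n‖ ^ 2) := by field_simp
      _ ≤ A⁻¹ * ‖x‖ ^ 2 := mul_le_mul_of_nonneg_left hnorm2 (by positivity)
    calc ‖B₀ x‖ = Real.sqrt (‖B₀ x‖ ^ 2) := (Real.sqrt_sq (norm_nonneg _)).symm
    _ ≤ Real.sqrt (A⁻¹ * ‖x‖ ^ 2) := Real.sqrt_le_sqrt hsq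
    _ = Real.sqrt A⁻¹ * Real.sqrt (‖x‖ ^ 2) := Real.sqrt_mul (by positivity) _
    _ = Real.sqrt A⁻¹ * ‖x‖ := by rw [Real.sqrt_sq (norm_nonneg _)]
  let BV : V →L[ℂ] H := LinearMap.mkContinuous B₀ (Real.sqrt A⁻¹) hbound
  set W : Submodule ℂ H := V.topologicalClosure with hW
  haveI : CompleteSpace W := IsClosed.completeSpace_coe (hs := V.isClosed_topologicalClosure)
  let ιlin : V →ₗ[ℂ] W := Submodule.inclusion V.le_topologicalClosure
  have hιn : ∀ x : V, ‖ιlin x‖ ≤ 1 * ‖x‖ := fun x => by rw [one_mul]; rfl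
  let ι : V →L[ℂ] W := LinearMap.mkContinuous ιlin 1 hιn
  have hiso : Isometry ι := AddMonoidHomClass.isometry_of_norm ι (fun x => rfl)
  have hui : IsUniformInducing ι := hiso.isUniformInducing
  have hdense : DenseRange ι := by
    intro w
    rw [closure_subtype]
    have hsub2 : (V : Set H) ⊆ Subtype.val '' Set.range ι := by
      intro y hy
      exact ⟨⟨y, V.le_topologicalClosure hy⟩, ⟨⟨y, hy⟩, rfl⟩, rfl⟩
    have hw : (w : H) ∈ closure (V : Set H) := by
      rw [← Submodule.topologicalClosure_coe]
      exact w.2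
    exact closure_mono hsub2 hw
  let Bw : W →L[ℂ] H := BV.extend ι
  let B : H →L[ℂ] H := Bw.comp (Submodule.orthogonalProjection W : H →L[ℂ] W)
  have hBe : ∀ n, B (fseq n) = e n := by
    intro n
    have hmemV : fseq n ∈ V := Submodule.subset_span ⟨n, rfl⟩
    have hmemW : fseq n ∈ W := V.le_topologicalClosure hmemV
    have h1 : Submodule.orthogonalProjection W (fseq n) = ⟨fseq n, hmemW⟩ :=
      Submodule.orthogonalProjection_mem_subspace_eq_self (⟨fseq n, hmemW⟩ : W)
    have h2 : (⟨fseq n, hmemW⟩ : W) = ι ⟨fseq n, hmemV⟩ := rfl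
    have h3 : (⟨fseq n, hmemV⟩ : V) = bV n := (Module.Basis.span_apply hli n).symm
    show Bw (Submodule.orthogonalProjection W (fseq n)) = e n
    rw [h1, h2, ContinuousLinearMap.extend_eq (h_dense := hdense) (h_e := hui)]
    show B₀ _ = e n
    rw [h3]
    exact Module.Basis.constr_basis bV ℂ _ n
  have hfun : (fun n => B (fseq n)) = fun n => e n := funext hBe
  refine ⟨B, ?_, ?_⟩
  · rw [hfun]; exact e.orthonormal
  · rw [hfun]; exact e.dense_span


/-- TFAE: (1) `{f_n}` is a CO sequence (some bounded operator maps it to an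
orthonormal basis of `H`); (2) the analysis operator of `{f_n}` is surjective onto `ℓ²(ℕ)`;
(3) `{f_n}` is a Riesz–Fischer sequence. -/
theorem stmt8 {H : Type*} [NormedAddCommGroup H] [InnerProductSpace ℂ H]
    [CompleteSpace H] [TopologicalSpace.SeparableSpace H]
    (hH : ¬ FiniteDimensional ℂ H) (fseq : ℕ → H) :
    ((∃ B : H →L[ℂ] H, Orthonormal ℂ (fun n => B (fseq n)) ∧
        (Submodule.span ℂ (Set.range fun n => B (fseq n))).topologicalClosure = ⊤) ↔
      (∀ c : lp (fun _ : ℕ => ℂ) 2, ∃ f : H, ∀ n : ℕ, ⟪f, fseq n⟫ = c n)) ∧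
    ((∀ c : lp (fun _ : ℕ => ℂ) 2, ∃ f : H, ∀ n : ℕ, ⟪f, fseq n⟫ = c n) ↔
      (∃ A : ℝ, 0 < A ∧ ∀ (k : ℕ) (a : ℕ → ℂ),
        A * ∑ n ∈ Finset.range (k + 1), ‖a n‖ ^ 2 ≤
          ‖∑ n ∈ Finset.range (k + 1), a n • fseq n‖ ^ 2)) := by
  constructor
  · exact ⟨aux_12 fseq, fun h2 => aux_31 hH fseq (aux_23 fseq h2)⟩
  · exact ⟨aux_23 fseq, fun h3 => aux_12 fseq (aux_31 hH fseq h3)⟩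
end
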